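/- Necessity of isotropy: let U ∈ ℝ^{3×3} be symmetric positive definite with eigenvalues λ₁, λ₂, λ₃. If the value F(U; f, g) = (fᵀUf + gᵀUg)/((fᵀUf)(gᵀUg) − (fᵀUg)²) is the same for all orthonormal pairs (f, g) in ℝ³, then λ₁ = λ₂ = λ₃, i.e., U = τ·I₃ for some τ > 0. -/

import Mathlib

open scoped Matrix

/-- Necessity of isotropy: if `U` is symmetric positive definite and the value
`F(U; f, g) = (fᵀUf + gᵀUg)/((fᵀUf)(gᵀUg) − (fᵀUg)²)` is the same for all
orthonormal pairs `(f, g)` in `ℝ³`, then `U = τ·I₃` for some `τ > 0`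
(equivalently, all eigenvalues of `U` coincide). -/
theorem isotropy_necessity (U : Matrix (Fin 3) (Fin 3) ℝ) (hU : U.PosDef)
    (hUsymm : U.IsSymm)
    (hconst : ∃ c : ℝ, ∀ f g : Fin 3 → ℝ, f ⬝ᵥ f = 1 → g ⬝ᵥ g = 1 → f ⬝ᵥ g = 0 →
      (f ⬝ᵥ U.mulVec f + g ⬝ᵥ U.mulVec g) /
          ((f ⬝ᵥ U.mulVec f) * (g ⬝ᵥ U.mulVec g) - (f ⬝ᵥ U.mulVec g) ^ 2) = c) :
    ∃ τ : ℝ, 0 < τ ∧ U = τ • (1 : Matrix (Fin 3) (Fin 3) ℝ) := by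
  obtain ⟨c, hc⟩ := hconst
  have hH : U.IsHermitian := hU.1
  set lam : Fin 3 → ℝ := hH.eigenvalues with hlam
  set v : Fin 3 → (Fin 3 → ℝ) := fun i => ⇑(hH.eigenvectorBasis i) with hv
  have hdot : ∀ i j, v i ⬝ᵥ v j = if i = j then 1 else 0 := by
    intro i j
    have h := (orthonormal_iff_ite (𝕜 := ℝ)).mp hH.eigenvectorBasis.orthonormal i j
    rw [EuclideanSpace.inner_eq_star_dotProduct] at h
    rw [dotProduct_comm]; simpa [hv] using h
  have hq : ∀ i j, v i ⬝ᵥ U.mulVec (v j) = if i = j then lam j else 0 := by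
    intro i j
    rw [show U *ᵥ v j = lam j • v j from hH.mulVec_eigenvectorBasis j,
      dotProduct_smul, hdot]
    by_cases h : i = j <;> simp [h]
  have hpos : ∀ i, 0 < lam i := fun i => hU.eigenvalues_pos i
  have key : ∀ i j : Fin 3, i ≠ j → lam i + lam j = c * (lam i * lam j) := by
    intro i j hij
    have h := hc (v i) (v j) (by rw [hdot]; simp) (by rw [hdot]; simp)
      (by rw [hdot]; simp [hij])
    rw [hq, hq, hq] at h
    simp only [if_pos rfl, if_neg hij, if_true] at h
    have hne : lam i * lam j - 0 ^ 2 ≠ 0 := by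
      have := mul_pos (hpos i) (hpos j); nlinarith
    field_simp at h
    linear_combination h
  have h01 := key 0 1 (by decide)
  have h02 := key 0 2 (by decide)
  have h12 := key 1 2 (by decide)
  have e12 : lam 1 = lam 2 := by
    have hfac : (lam 1 - lam 2) * (1 - c * lam 0) = 0 := by linear_combination h01 - h02
    rcases mul_eq_zero.mp hfac with h | h
    · linarith
    · exfalso
      have : lam 1 + lam 2 = lam 1 := by
        have : c * lam 0 = 1 := by linarith
        nlinarith [h01, h12, hpos 0, hpos 1, hpos 2]
      linarith [hpos 2]
  have e01 : lam 0 = lam 1 := by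
    have hfac : (lam 0 - lam 1) * (1 - c * lam 2) = 0 := by linear_combination h02 - h12
    rcases mul_eq_zero.mp hfac with h | h
    · linarith
    · exfalso
      have : c * lam 2 = 1 := by linarith
      have : lam 1 + lam 2 = lam 2 := by nlinarith [h12]
      linarith [hpos 1]
  refine ⟨lam 0, hpos 0, ?_⟩
  have hdiag : Matrix.diagonal (RCLike.ofReal ∘ lam) =
      (lam 0) • (1 : Matrix (Fin 3) (Fin 3) ℝ) := by
    have hall : ∀ i : Fin 3, lam i = lam 0 := by
      intro i; fin_cases i <;> simp [e01, e12, ← e01]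
    ext i j
    by_cases h : i = j
    · subst h; simp [Matrix.diagonal, hall i]
    · simp [Matrix.diagonal, Matrix.one_apply, h]
  have hspec := hH.spectral_theorem
  rw [hdiag] at hspec
  rw [hspec]
  rw [map_smul, map_one]
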